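/- Two standard Young tableaux T and S of the same skew shape λ/μ are Knuth-equivalent (connected by a sequence of Knuth transformations on SYTs) if and only if their Yamanouchi permutations β(T) and β(S) are Knuth-equivalent as permutations. -/

import Mathlib

/-- `lam/mu` is a skew shape: `lam` and `mu` are partitions (1-indexed, weakly decreasing,
with finitely many nonzero parts) with `mu ⊆ lam`. -/
def IsSkewShape (lam mu : ℕ → ℕ) : Prop :=
  (∀ i, 1 ≤ i → lam (i+1) ≤ lam i) ∧ (∀ i, 1 ≤ i → mu (i+1) ≤ mu i) ∧
  (∀ i, mu i ≤ lam i) ∧ (∃ N, ∀ i, N ≤ i → lam i = 0)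

/-- A standard Young tableau of skew shape `lam/mu` with `n` entries, recorded by the
(1-indexed) row and column of each entry `1, …, n`.  Rows are numbered from top to
bottom, columns from left to right; the cells of `lam/mu` in row `r` are the columns `c`
with `mu r < c ≤ lam r`.  Entries increase along rows and columns.  The functions `row`
and `col` are normalized to `0` outside `{1, …, n}`. -/
structure SkewSYT (lam mu : ℕ → ℕ) (n : ℕ) where
  row : ℕ → ℕ
  col : ℕ → ℕ
  row_pos : ∀ k, 1 ≤ k → k ≤ n → 1 ≤ row k
  mem_cell : ∀ k, 1 ≤ k → k ≤ n → mu (row k) < col k ∧ col k ≤ lam (row k)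
  inj' : ∀ k l, 1 ≤ k → k ≤ n → 1 ≤ l → l ≤ n → row k = row l → col k = col l → k = l
  surj' : ∀ r c, 1 ≤ r → mu r < c → c ≤ lam r → ∃ k, 1 ≤ k ∧ k ≤ n ∧ row k = r ∧ col k = c
  row_inc : ∀ k l, 1 ≤ k → k < l → l ≤ n → row k = row l → col k < col l
  col_inc : ∀ k l, 1 ≤ k → k < l → l ≤ n → col k = col l → row k < row l
  row_out : ∀ k, ¬(1 ≤ k ∧ k ≤ n) → row k = 0
  col_out : ∀ k, ¬(1 ≤ k ∧ k ≤ n) → col k = 0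

/-- The peak set of a standard Young tableau: `i` (with `2 ≤ i ≤ n-1`) is a peak when
`i-1` is an ascent (`i` is not in a lower row than `i-1`) and `i` is a descent
(`i+1` is in a strictly lower row than `i`). -/
def SkewSYT.peakSet {lam mu : ℕ → ℕ} {n : ℕ} (T : SkewSYT lam mu n) : Set ℕ :=
  {i | 2 ≤ i ∧ i + 1 ≤ n ∧ T.row i ≤ T.row (i-1) ∧ T.row i < T.row (i+1)}

/-- The valley set of a standard Young tableau: `i-1` is a descent and `i` is an ascent. -/
def SkewSYT.valleySet {lam mu : ℕ → ℕ} {n : ℕ} (T : SkewSYT lam mu n) : Set ℕ :=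
  {i | 2 ≤ i ∧ i + 1 ≤ n ∧ T.row (i-1) < T.row i ∧ T.row (i+1) ≤ T.row i}

/-- Swap the values of `f` at positions `a` and `b`. -/
def swapFun (f : ℕ → ℕ) (a b : ℕ) : ℕ → ℕ :=
  fun k => if k = a then f b else if k = b then f a else f k

/-- The condition (in terms of the row word of the tableau) under which the Knuth
transformation `κ_i` on SYTs swaps the entries `i-1` and `i` (cases (i) and (iii)):
either `i` is a valley and `i+1` lies in a lower row than `i-1`, or `i` is a peak and
`i+1` does not lie in a lower row than `i-1`.  In the remaining cases (ii) and (iv)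
(`i` a valley with `i+1` not lower than `i-1`, or `i` a peak with `i+1` lower than `i-1`)
the entries `i` and `i+1` are swapped. -/
def swapLowCond (row : ℕ → ℕ) (i : ℕ) : Prop :=
  (row (i-1) < row i ∧ row (i+1) ≤ row i ∧ row (i-1) < row (i+1)) ∨
  (row i ≤ row (i-1) ∧ row i < row (i+1) ∧ row (i+1) ≤ row (i-1))

open scoped Classical in
/-- The effect of the Knuth transformation `κ_i` on a position function `f` (either the
row function or the column function of the tableau), the case distinction being made
through the row function `row`. -/
noncomputable def kSwap (row : ℕ → ℕ) (i : ℕ) (f : ℕ → ℕ) : ℕ → ℕ :=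
  if swapLowCond row i then swapFun f (i-1) i else swapFun f i (i+1)

/-- The row function of `κ_i T`. -/
noncomputable def kRow {lam mu : ℕ → ℕ} {n : ℕ} (T : SkewSYT lam mu n) (i : ℕ) : ℕ → ℕ :=
  kSwap T.row i T.row

/-- The column function of `κ_i T`. -/
noncomputable def kCol {lam mu : ℕ → ℕ} {n : ℕ} (T : SkewSYT lam mu n) (i : ℕ) : ℕ → ℕ :=
  kSwap T.row i T.col

/-- The Knuth transformation `κ_i` on words/permutations (moves `acb ↦ cab`, `bca ↦ bac`,
`cab ↦ acb`, `bac ↦ bca` for `a < b < c` at positions `i-1, i, i+1`). -/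
def kappaP (w : ℕ → ℕ) (i : ℕ) : ℕ → ℕ :=
  if (w (i-1) < w i ∧ w (i+1) < w i ∧ w (i-1) < w (i+1)) ∨
      (w i < w (i-1) ∧ w i < w (i+1) ∧ w (i+1) < w (i-1)) then
    fun j => if j = i - 1 then w i else if j = i then w (i-1) else w j
  else
    fun j => if j = i then w (i+1) else if j = i + 1 then w i else w j

/-- The peak set of a permutation/word: `w (i-1) < w i > w (i+1)` with `2 ≤ i ≤ n-1`. -/
def peakSetP (n : ℕ) (w : ℕ → ℕ) : Set ℕ :=
  {i | 2 ≤ i ∧ i + 1 ≤ n ∧ w (i-1) < w i ∧ w (i+1) < w i}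

/-- The valley set of a permutation/word: `w (i-1) > w i < w (i+1)` with `2 ≤ i ≤ n-1`. -/
def valleySetP (n : ℕ) (w : ℕ → ℕ) : Set ℕ :=
  {i | 2 ≤ i ∧ i + 1 ≤ n ∧ w i < w (i-1) ∧ w i < w (i+1)}

/-- An elementary Knuth move between permutations/words of length `n`. -/
def KStepP (n : ℕ) (w w' : ℕ → ℕ) : Prop :=
  ∃ i, 2 ≤ i ∧ i + 1 ≤ n ∧
    ((w (i-1) < w i ∧ w (i+1) < w i) ∨ (w i < w (i-1) ∧ w i < w (i+1))) ∧
    w' = kappaP w i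

/-- Knuth equivalence of permutations/words of length `n`. -/
def KEquivP (n : ℕ) : (ℕ → ℕ) → (ℕ → ℕ) → Prop := Relation.ReflTransGen (KStepP n)

/-- The Yamanouchi permutation associated to the Yamanouchi word `y` of an SYT of skew
shape `lam/mu` (with `a_i = lam i - mu i`): the `a_i` occurrences of the letter `i` are
replaced, from left to right in decreasing order, by the numbers
`a_1 + ⋯ + a_{i-1} + 1, …, a_1 + ⋯ + a_{i-1} + a_i`; thus position `j` receives
`a_1 + ⋯ + a_{y j - 1}` plus the number of occurrences of `y j` at positions `≥ j`. -/
def yamPerm (lam mu : ℕ → ℕ) (n : ℕ) (y : ℕ → ℕ) : ℕ → ℕ :=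
  fun j => (∑ t ∈ Finset.Ico 1 (y j), (lam t - mu t)) +
    ((Finset.Icc j n).filter (fun t => y t = y j)).card

/-- An elementary Knuth move between standard Young tableaux of skew shape `lam/mu`. -/
def KStepT {lam mu : ℕ → ℕ} {n : ℕ} (T S : SkewSYT lam mu n) : Prop :=
  ∃ i, i ∈ T.peakSet ∪ T.valleySet ∧ S.row = kRow T i ∧ S.col = kCol T i

namespace Stmt8Aux

open Finset

variable {lam mu : ℕ → ℕ} {n : ℕ}

/-- The transposition of `p` and `p+1` as a function. -/
def swp (p t : ℕ) : ℕ := if t = p then p+1 else if t = p+1 then p else t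

lemma swapFun_eq (f : ℕ → ℕ) (p j : ℕ) : swapFun f p (p+1) j = f (swp p j) := by
  unfold swapFun swp; split_ifs <;> rfl

lemma swp_invol (p t : ℕ) : swp p (swp p t) = t := by
  unfold swp; split_ifs <;> omega

lemma anti (g : ℕ → ℕ) (hg : ∀ i, 1 ≤ i → g (i+1) ≤ g i) {r s : ℕ} (hr : 1 ≤ r)
    (hrs : r ≤ s) : g s ≤ g r := by
  induction s, hrs using Nat.le_induction with
  | base => exact le_refl _
  | succ s hs ih => exact le_trans (hg s (le_trans hr hs)) ih

lemma lt_iff_col (T : SkewSYT lam mu n) {k l : ℕ} (hk1 : 1 ≤ k) (hkn : k ≤ n)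
    (hl1 : 1 ≤ l) (hln : l ≤ n) (hc : T.col k = T.col l) : k < l ↔ T.row k < T.row l := by
  constructor
  · intro hkl; exact T.col_inc k l hk1 hkl hln hc
  · intro hrl
    rcases lt_trichotomy k l with h' | h' | h'
    · exact h'
    · subst h'; omega
    · exact absurd (T.col_inc l k hl1 h' hkn hc.symm) (by omega)

lemma lt_iff_row (T : SkewSYT lam mu n) {k l : ℕ} (hk1 : 1 ≤ k) (hkn : k ≤ n)
    (hl1 : 1 ≤ l) (hln : l ≤ n) (hr : T.row k = T.row l) : k < l ↔ T.col k < T.col l := by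
  constructor
  · intro hkl; exact T.row_inc k l hk1 hkl hln hr
  · intro hcl
    rcases lt_trichotomy k l with h' | h' | h'
    · exact h'
    · subst h'; omega
    · exact absurd (T.row_inc l k hl1 h' hkn hr.symm) (by omega)

lemma count_le (T : SkewSYT lam mu n) {k : ℕ} (hk1 : 1 ≤ k) (hkn : k ≤ n) :
    ((Finset.Icc k n).filter (fun t => T.row t = T.row k)).card
      ≤ lam (T.row k) - mu (T.row k) := by
  have h1 : ((Finset.Icc k n).filter (fun t => T.row t = T.row k)).card
      ≤ (Finset.Ioc (mu (T.row k)) (lam (T.row k))).card := by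
    apply Finset.card_le_card_of_injOn T.col
    · intro t ht
      simp only [Finset.mem_coe, Finset.mem_filter, Finset.mem_Icc] at ht
      have hc := T.mem_cell t (by omega) (by omega)
      rw [ht.2] at hc
      simp only [Finset.mem_coe, Finset.mem_Ioc]
      exact hc
    · intro a ha b hb hab
      simp only [Finset.coe_filter, Set.mem_setOf_eq, Finset.mem_Icc] at ha hb
      exact T.inj' a b (by omega) (by omega) (by omega) (by omega)
        (ha.2.trans hb.2.symm) hab
  simpa using h1

lemma A_mono {r s : ℕ} (hrs : r ≤ s) :
    (∑ t ∈ Finset.Ico 1 r, (lam t - mu t)) ≤ ∑ t ∈ Finset.Ico 1 s, (lam t - mu t) :=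
  Finset.sum_le_sum_of_subset (Finset.Ico_subset_Ico le_rfl hrs)

lemma yam_lb (T : SkewSYT lam mu n) {k : ℕ} (hk1 : 1 ≤ k) (hkn : k ≤ n) :
    (∑ t ∈ Finset.Ico 1 (T.row k), (lam t - mu t)) < yamPerm lam mu n T.row k := by
  unfold yamPerm
  have : k ∈ (Finset.Icc k n).filter (fun t => T.row t = T.row k) := by
    simp [Finset.mem_Icc, hkn]
  have hpos := Finset.card_pos.mpr ⟨k, this⟩
  omega

lemma yam_ub (T : SkewSYT lam mu n) {k : ℕ} (hk1 : 1 ≤ k) (hkn : k ≤ n) :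
    yamPerm lam mu n T.row k ≤ ∑ t ∈ Finset.Ico 1 (T.row k + 1), (lam t - mu t) := by
  have hr : 1 ≤ T.row k := T.row_pos k hk1 hkn
  rw [Finset.sum_Ico_succ_top hr]
  unfold yamPerm
  exact Nat.add_le_add_left (count_le T hk1 hkn) _

lemma yam_lt_of_row_lt (T : SkewSYT lam mu n) {j k : ℕ} (hj1 : 1 ≤ j) (hjn : j ≤ n)
    (hk1 : 1 ≤ k) (hkn : k ≤ n) (hr : T.row j < T.row k) :
    yamPerm lam mu n T.row j < yamPerm lam mu n T.row k := by
  have h1 := yam_ub T hj1 hjn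
  have h2 := A_mono (lam := lam) (mu := mu) (show T.row j + 1 ≤ T.row k by omega)
  have h3 := yam_lb T hk1 hkn
  omega

lemma yam_lt_of_row_eq (T : SkewSYT lam mu n) {j k : ℕ} (hj1 : 1 ≤ j) (hjk : j < k)
    (hkn : k ≤ n) (hr : T.row j = T.row k) :
    yamPerm lam mu n T.row k < yamPerm lam mu n T.row j := by
  unfold yamPerm
  rw [hr]
  apply Nat.add_lt_add_left
  apply Finset.card_lt_card
  rw [Finset.ssubset_iff_of_subset
    (Finset.filter_subset_filter _ (Finset.Icc_subset_Icc (by omega) le_rfl))]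
  refine ⟨j, ?_, ?_⟩
  · simp only [Finset.mem_filter, Finset.mem_Icc]
    exact ⟨⟨le_rfl, by omega⟩, hr⟩
  · simp only [Finset.mem_filter, Finset.mem_Icc]
    intro hcon
    omega

lemma yam_lt_iff (T : SkewSYT lam mu n) {j k : ℕ} (hj1 : 1 ≤ j) (hjk : j < k) (hkn : k ≤ n) :
    (yamPerm lam mu n T.row j < yamPerm lam mu n T.row k ↔ T.row j < T.row k) := by
  constructor
  · intro hy
    rcases lt_trichotomy (T.row j) (T.row k) with h' | h' | h'
    · exact h'
    · exact absurd (yam_lt_of_row_eq T hj1 hjk hkn h') (by omega)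
    · exact absurd (yam_lt_of_row_lt T (by omega) (by omega) hj1 (by omega) h') (by omega)
  · exact yam_lt_of_row_lt T hj1 (by omega) (by omega) hkn

lemma yam_gt_iff (T : SkewSYT lam mu n) {j k : ℕ} (hj1 : 1 ≤ j) (hjk : j < k) (hkn : k ≤ n) :
    (yamPerm lam mu n T.row k < yamPerm lam mu n T.row j ↔ T.row k ≤ T.row j) := by
  constructor
  · intro hy
    by_contra hcon
    exact absurd (yam_lt_of_row_lt T hj1 (by omega) (by omega) hkn (by omega)) (by omega)
  · intro hle
    rcases eq_or_lt_of_le hle with h' | h'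
    · exact yam_lt_of_row_eq T hj1 hjk hkn h'.symm
    · exact yam_lt_of_row_lt T (by omega) hkn hj1 (by omega) h'

end Stmt8Aux

namespace Stmt8Aux

variable {lam mu : ℕ → ℕ} {n : ℕ}

lemma yam_swap (y : ℕ → ℕ) {p : ℕ} (hp1 : 1 ≤ p) (hpn : p + 1 ≤ n) (hy : y p ≠ y (p+1)) :
    yamPerm lam mu n (swapFun y p (p+1)) = swapFun (yamPerm lam mu n y) p (p+1) := by
  funext j
  rw [swapFun_eq (yamPerm lam mu n y) p j]
  simp only [yamPerm, swapFun_eq]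
  congr 1
  apply Finset.card_nbij' (swp p) (swp p)
  · intro t ht
    simp only [Finset.mem_coe, Finset.mem_filter, Finset.mem_Icc] at ht ⊢
    refine ⟨⟨?_, ?_⟩, ht.2⟩
    · have hb : j ≠ p ∨ t ≠ p + 1 := by
        by_contra hcon
        push_neg at hcon
        obtain ⟨rfl, rfl⟩ := hcon
        exact hy (by simpa [swp] using ht.2)
      have h1 := ht.1.1
      rcases hb with hb | hb <;> (unfold swp; split_ifs <;> omega)
    · have h2 := ht.1.2
      unfold swp; split_ifs <;> omega
  · intro t ht
    simp only [Finset.mem_coe, Finset.mem_filter, Finset.mem_Icc] at ht ⊢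
    refine ⟨⟨?_, ?_⟩, ?_⟩
    · have hb : j ≠ p + 1 ∨ t ≠ p + 1 := by
        by_contra hcon
        push_neg at hcon
        obtain ⟨rfl, rfl⟩ := hcon
        have h2 : y (p+1) = y p := by simpa [swp] using ht.2
        exact hy h2.symm
      have h1 := ht.1.1
      rcases hb with hb | hb <;>
        (unfold swp at h1 ⊢; split_ifs at h1 ⊢ <;> omega)
    · have h2 := ht.1.2
      unfold swp; split_ifs <;> omega
    · rw [swp_invol]; exact ht.2
  · intro a _; exact swp_invol p a
  · intro a _; exact swp_invol p a

lemma col_adj (h : IsSkewShape lam mu) (T : SkewSYT lam mu n) {k : ℕ}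
    (hk1 : 1 ≤ k) (hkn : k + 1 ≤ n) (hc : T.col k = T.col (k+1)) :
    T.row (k+1) = T.row k + 1 := by
  have hrow := T.col_inc k (k+1) hk1 (by omega) hkn hc
  by_contra hne
  have hcell1 := T.mem_cell k hk1 (by omega)
  have hcell2 := T.mem_cell (k+1) (by omega) hkn
  have hpos := T.row_pos k hk1 (by omega)
  have hmu : mu (T.row k + 1) ≤ mu (T.row k) := h.2.1 _ hpos
  have hlam : lam (T.row (k+1)) ≤ lam (T.row k + 1) :=
    anti lam h.1 (by omega) (by omega)
  obtain ⟨e, he1, hen, her, hec⟩ :=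
    T.surj' (T.row k + 1) (T.col k) (by omega) (by omega) (by omega)
  have h1 : k < e :=
    (lt_iff_col T hk1 (by omega) he1 hen hec.symm).mpr (by omega)
  have h2 : e < k + 1 :=
    (lt_iff_col T he1 hen (by omega) hkn (by omega)).mpr (by omega)
  omega

lemma row_adj (T : SkewSYT lam mu n) {k : ℕ}
    (hk1 : 1 ≤ k) (hkn : k + 1 ≤ n) (hr : T.row k = T.row (k+1)) :
    T.col (k+1) = T.col k + 1 := by
  have hcol := T.row_inc k (k+1) hk1 (by omega) hkn hr
  by_contra hne
  have hcell1 := T.mem_cell k hk1 (by omega)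
  have hcell2 := T.mem_cell (k+1) (by omega) hkn
  have hpos := T.row_pos k hk1 (by omega)
  rw [← hr] at hcell2
  obtain ⟨e, he1, hen, her, hec⟩ :=
    T.surj' (T.row k) (T.col k + 1) (by omega) (by omega) (by omega)
  have h1 : k < e :=
    (lt_iff_row T hk1 (by omega) he1 hen her.symm).mpr (by omega)
  have h2 : e < k + 1 :=
    (lt_iff_row T he1 hen (by omega) hkn (by rw [her, hr])).mpr (by omega)
  omega

end Stmt8Aux

namespace Stmt8Aux

variable {lam mu : ℕ → ℕ} {n : ℕ}

lemma colne_A (h : IsSkewShape lam mu) (T : SkewSYT lam mu n) {i : ℕ}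
    (hi2 : 2 ≤ i) (hin : i + 1 ≤ n)
    (h1 : T.row (i-1) < T.row i) (h2 : T.row (i+1) ≤ T.row i)
    (h3 : T.row (i-1) < T.row (i+1)) :
    T.col (i-1) ≠ T.col i := by
  intro hc
  have hE : i - 1 + 1 = i := by omega
  have hadj : T.row i = T.row (i-1) + 1 := by
    have := col_adj h T (k := i-1) (by omega) (by omega) (by rw [hE]; exact hc)
    rw [hE] at this; exact this
  have h4 : T.row (i+1) = T.row i := by omega
  have h5 : T.col (i+1) = T.col i + 1 := row_adj T (by omega) hin h4.symm
  have hcell0 := T.mem_cell (i-1) (by omega) (by omega)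
  have hcell1 := T.mem_cell i (by omega) (by omega)
  have hcell2 := T.mem_cell (i+1) (by omega) hin
  rw [h4] at hcell2
  by_cases hsh : T.col i + 1 ≤ lam (T.row (i-1))
  · obtain ⟨e, he1, hen, her, hec⟩ :=
      T.surj' (T.row (i-1)) (T.col i + 1) (T.row_pos (i-1) (by omega) (by omega))
        (by omega) hsh
    have hlt1 : i - 1 < e :=
      (lt_iff_row T (by omega) (by omega) he1 hen her.symm).mpr (by omega)
    have hlt2 : e < i + 1 :=
      (lt_iff_col T he1 hen (by omega) hin (by omega)).mpr (by omega)
    have hne : e ≠ i := by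
      intro hcon; rw [hcon] at her; omega
    omega
  · have hl1 : lam (T.row (i-1) + 1) ≤ lam (T.row (i-1)) :=
      h.1 _ (T.row_pos (i-1) (by omega) (by omega))
    rw [← hadj] at hl1
    omega

lemma colne_B (h : IsSkewShape lam mu) (T : SkewSYT lam mu n) {i : ℕ}
    (hi2 : 2 ≤ i) (hin : i + 1 ≤ n)
    (h1 : T.row i ≤ T.row (i-1)) (h2 : T.row i < T.row (i+1))
    (h3 : T.row (i-1) < T.row (i+1)) :
    T.col i ≠ T.col (i+1) := by
  intro hc
  have hE : i - 1 + 1 = i := by omega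
  have hadj : T.row (i+1) = T.row i + 1 := col_adj h T (by omega) hin hc
  have h4 : T.row (i-1) = T.row i := by omega
  have h5 : T.col i = T.col (i-1) + 1 := by
    have := row_adj T (k := i-1) (by omega) (by omega) (by rw [hE, h4])
    rw [hE] at this; exact this
  have hcell0 := T.mem_cell (i-1) (by omega) (by omega)
  have hcell1 := T.mem_cell i (by omega) (by omega)
  have hcell2 := T.mem_cell (i+1) (by omega) hin
  rw [h4] at hcell0
  rw [hadj] at hcell2
  have hmu : mu (T.row i + 1) ≤ mu (T.row i) :=
    h.2.1 _ (T.row_pos i (by omega) (by omega))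
  obtain ⟨e, he1, hen, her, hec⟩ :=
    T.surj' (T.row i + 1) (T.col (i-1)) (by omega) (by omega) (by omega)
  have hlt1 : i - 1 < e :=
    (lt_iff_col T (by omega) (by omega) he1 hen (by omega)).mpr (by omega)
  have hlt2 : e < i + 1 :=
    (lt_iff_row T he1 hen (by omega) hin (by omega)).mpr (by omega)
  have hne : e ≠ i := by
    intro hcon; rw [hcon] at hec; omega
  omega

lemma rows_ne (T : SkewSYT lam mu n) {i : ℕ} (hi2 : 2 ≤ i) (hin : i + 1 ≤ n)
    (hg : (T.row (i-1) < T.row i ∧ T.row (i+1) ≤ T.row i) ∨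
      (T.row i ≤ T.row (i-1) ∧ T.row i < T.row (i+1))) :
    (swapLowCond T.row i → T.row (i-1) ≠ T.row i) ∧
      (¬ swapLowCond T.row i → T.row i ≠ T.row (i+1)) := by
  unfold swapLowCond
  omega

lemma exists_swap (T : SkewSYT lam mu n) {p : ℕ} (hp1 : 1 ≤ p) (hpn : p + 1 ≤ n)
    (hr : T.row p ≠ T.row (p+1)) (hc : T.col p ≠ T.col (p+1)) :
    ∃ S : SkewSYT lam mu n, S.row = swapFun T.row p (p+1) ∧ S.col = swapFun T.col p (p+1) := by
  have hswp : ∀ j, 1 ≤ j → j ≤ n → 1 ≤ swp p j ∧ swp p j ≤ n := by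
    intro j hj1 hjn; unfold swp; split_ifs <;> omega
  refine ⟨⟨swapFun T.row p (p+1), swapFun T.col p (p+1), ?_, ?_, ?_, ?_, ?_, ?_, ?_, ?_⟩,
    rfl, rfl⟩
  · intro k hk1 hkn
    rw [swapFun_eq]
    exact T.row_pos _ (hswp k hk1 hkn).1 (hswp k hk1 hkn).2
  · intro k hk1 hkn
    rw [swapFun_eq, swapFun_eq]
    exact T.mem_cell _ (hswp k hk1 hkn).1 (hswp k hk1 hkn).2
  · intro k l hk1 hkn hl1 hln hre hce
    rw [swapFun_eq, swapFun_eq] at hre hce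
    have hs := T.inj' _ _ (hswp k hk1 hkn).1 (hswp k hk1 hkn).2
      (hswp l hl1 hln).1 (hswp l hl1 hln).2 hre hce
    have := congrArg (swp p) hs
    rwa [swp_invol, swp_invol] at this
  · intro r c h1r hmc hcl
    obtain ⟨k, hk1, hkn, hkr, hkc⟩ := T.surj' r c h1r hmc hcl
    refine ⟨swp p k, (hswp k hk1 hkn).1, (hswp k hk1 hkn).2, ?_, ?_⟩
    · rw [swapFun_eq, swp_invol]; exact hkr
    · rw [swapFun_eq, swp_invol]; exact hkc
  · intro k l hk1 hkl hln hre
    rw [swapFun_eq, swapFun_eq] at hre ⊢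
    by_cases hb : k = p ∧ l = p + 1
    · obtain ⟨hb1, hb2⟩ := hb
      exfalso
      apply hr
      have e1 : swp p k = p + 1 := by unfold swp; split_ifs <;> omega
      have e2 : swp p l = p := by unfold swp; split_ifs <;> omega
      rw [e1, e2] at hre
      exact hre.symm
    · have hb' := not_and_or.mp hb
      have hkl' : swp p k < swp p l := by
        rcases hb' with hb' | hb' <;> (unfold swp; split_ifs <;> omega)
      exact T.row_inc _ _ (hswp k hk1 (by omega)).1 hkl' (hswp l (by omega) hln).2 hre
  · intro k l hk1 hkl hln hce
    rw [swapFun_eq, swapFun_eq] at hce ⊢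
    by_cases hb : k = p ∧ l = p + 1
    · obtain ⟨hb1, hb2⟩ := hb
      exfalso
      apply hc
      have e1 : swp p k = p + 1 := by unfold swp; split_ifs <;> omega
      have e2 : swp p l = p := by unfold swp; split_ifs <;> omega
      rw [e1, e2] at hce
      exact hce.symm
    · have hb' := not_and_or.mp hb
      have hkl' : swp p k < swp p l := by
        rcases hb' with hb' | hb' <;> (unfold swp; split_ifs <;> omega)
      exact T.col_inc _ _ (hswp k hk1 (by omega)).1 hkl' (hswp l (by omega) hln).2 hce
  · intro k hk
    have h1 : k ≠ p := by omega
    have h2 : k ≠ p + 1 := by omega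
    unfold swapFun
    rw [if_neg h1, if_neg h2]
    exact T.row_out k hk
  · intro k hk
    have h1 : k ≠ p := by omega
    have h2 : k ≠ p + 1 := by omega
    unfold swapFun
    rw [if_neg h1, if_neg h2]
    exact T.col_out k hk

end Stmt8Aux

namespace Stmt8Aux

variable {lam mu : ℕ → ℕ} {n : ℕ}

lemma equivs (T : SkewSYT lam mu n) {i : ℕ} (hi2 : 2 ≤ i) (hin : i + 1 ≤ n) :
    (yamPerm lam mu n T.row (i-1) < yamPerm lam mu n T.row i ↔ T.row (i-1) < T.row i) ∧
    (yamPerm lam mu n T.row i < yamPerm lam mu n T.row (i+1) ↔ T.row i < T.row (i+1)) ∧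
    (yamPerm lam mu n T.row (i-1) < yamPerm lam mu n T.row (i+1) ↔
      T.row (i-1) < T.row (i+1)) ∧
    (yamPerm lam mu n T.row i < yamPerm lam mu n T.row (i-1) ↔ T.row i ≤ T.row (i-1)) ∧
    (yamPerm lam mu n T.row (i+1) < yamPerm lam mu n T.row i ↔ T.row (i+1) ≤ T.row i) ∧
    (yamPerm lam mu n T.row (i+1) < yamPerm lam mu n T.row (i-1) ↔
      T.row (i+1) ≤ T.row (i-1)) :=
  ⟨yam_lt_iff T (by omega) (by omega) (by omega),
   yam_lt_iff T (by omega) (by omega) (by omega),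
   yam_lt_iff T (by omega) (by omega) (by omega),
   yam_gt_iff T (by omega) (by omega) (by omega),
   yam_gt_iff T (by omega) (by omega) (by omega),
   yam_gt_iff T (by omega) (by omega) (by omega)⟩

lemma col_formula (T : SkewSYT lam mu n) {k : ℕ} (hk1 : 1 ≤ k) (hkn : k ≤ n) :
    T.col k = mu (T.row k) + ((Finset.Icc 1 k).filter (fun l => T.row l = T.row k)).card := by
  have hcell := T.mem_cell k hk1 hkn
  have hcard : ((Finset.Icc 1 k).filter (fun l => T.row l = T.row k)).card
      = (Finset.Ioc (mu (T.row k)) (T.col k)).card := by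
    apply Finset.card_nbij T.col
    · intro l hl
      simp only [Finset.mem_coe, Finset.mem_filter, Finset.mem_Icc] at hl
      have hcl := T.mem_cell l hl.1.1 (le_trans hl.1.2 hkn)
      rw [hl.2] at hcl
      simp only [Finset.mem_coe, Finset.mem_Ioc]
      refine ⟨hcl.1, ?_⟩
      rcases eq_or_lt_of_le hl.1.2 with h' | h'
      · rw [h']
      · exact le_of_lt (T.row_inc l k hl.1.1 h' hkn hl.2)
    · intro a ha b hb hab
      simp only [Finset.coe_filter, Set.mem_setOf_eq, Finset.mem_Icc] at ha hb
      exact T.inj' a b ha.1.1 (le_trans ha.1.2 hkn) hb.1.1 (le_trans hb.1.2 hkn)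
        (ha.2.trans hb.2.symm) hab
    · intro c hcmem
      simp only [Finset.coe_Ioc, Set.mem_Ioc] at hcmem
      obtain ⟨l, hl1, hln, hlr, hlc⟩ := T.surj' (T.row k) c (T.row_pos k hk1 hkn)
        hcmem.1 (le_trans hcmem.2 hcell.2)
      have hlk : l ≤ k := by
        by_contra hcon
        have := T.row_inc k l hk1 (by omega) hln hlr.symm
        omega
      refine ⟨l, ?_, hlc⟩
      simp only [Finset.coe_filter, Set.mem_setOf_eq, Finset.mem_Icc]
      exact ⟨⟨hl1, hlk⟩, hlr⟩
  rw [hcard, Nat.card_Ioc]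
  omega

lemma row_eq_of_yam_eq (T S : SkewSYT lam mu n)
    (hy : yamPerm lam mu n T.row = yamPerm lam mu n S.row) : T.row = S.row := by
  funext k
  by_cases hk : 1 ≤ k ∧ k ≤ n
  · by_contra hne
    have hTk := congrFun hy k
    rcases Nat.lt_or_ge (T.row k) (S.row k) with hlt | hge
    · have h1 := yam_ub T hk.1 hk.2
      have h2 := A_mono (lam := lam) (mu := mu) (show T.row k + 1 ≤ S.row k by omega)
      have h3 := yam_lb S hk.1 hk.2
      omega
    · have hgt : S.row k < T.row k := by omega
      have h1 := yam_ub S hk.1 hk.2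
      have h2 := A_mono (lam := lam) (mu := mu) (show S.row k + 1 ≤ T.row k by omega)
      have h3 := yam_lb T hk.1 hk.2
      omega
  · rw [T.row_out k hk, S.row_out k hk]

lemma syt_ext {T S : SkewSYT lam mu n} (hr : T.row = S.row) (hc : T.col = S.col) : T = S := by
  cases T; cases S
  simp only at hr hc
  subst hr; subst hc
  rfl

lemma syt_ext_row (T S : SkewSYT lam mu n) (hr : T.row = S.row) : T = S := by
  have hc : T.col = S.col := by
    funext k
    by_cases hk : 1 ≤ k ∧ k ≤ n
    · rw [col_formula T hk.1 hk.2, col_formula S hk.1 hk.2, hr]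
    · rw [T.col_out k hk, S.col_out k hk]
  exact syt_ext hr hc

end Stmt8Aux

namespace Stmt8Aux

variable {lam mu : ℕ → ℕ} {n : ℕ}

lemma cond_iff (T : SkewSYT lam mu n) {i : ℕ} (hi2 : 2 ≤ i) (hin : i + 1 ≤ n) :
    ((yamPerm lam mu n T.row (i-1) < yamPerm lam mu n T.row i ∧
      yamPerm lam mu n T.row (i+1) < yamPerm lam mu n T.row i ∧
      yamPerm lam mu n T.row (i-1) < yamPerm lam mu n T.row (i+1)) ∨
     (yamPerm lam mu n T.row i < yamPerm lam mu n T.row (i-1) ∧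
      yamPerm lam mu n T.row i < yamPerm lam mu n T.row (i+1) ∧
      yamPerm lam mu n T.row (i+1) < yamPerm lam mu n T.row (i-1)))
    ↔ swapLowCond T.row i := by
  obtain ⟨e1, e2, e3, f1, f2, f3⟩ := equivs T hi2 hin
  unfold swapLowCond
  rw [e1, f2, e3, f1, e2, f3]

lemma gate_iff (T : SkewSYT lam mu n) {i : ℕ} (hi2 : 2 ≤ i) (hin : i + 1 ≤ n) :
    ((yamPerm lam mu n T.row (i-1) < yamPerm lam mu n T.row i ∧
      yamPerm lam mu n T.row (i+1) < yamPerm lam mu n T.row i) ∨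
     (yamPerm lam mu n T.row i < yamPerm lam mu n T.row (i-1) ∧
      yamPerm lam mu n T.row i < yamPerm lam mu n T.row (i+1)))
    ↔ ((T.row (i-1) < T.row i ∧ T.row (i+1) ≤ T.row i) ∨
       (T.row i ≤ T.row (i-1) ∧ T.row i < T.row (i+1))) := by
  obtain ⟨e1, e2, e3, f1, f2, f3⟩ := equivs T hi2 hin
  rw [e1, f2, f1, e2]

end Stmt8Aux

namespace Stmt8Aux

variable {lam mu : ℕ → ℕ} {n : ℕ}

lemma stepT_P {T S : SkewSYT lam mu n} (hTS : KStepT T S) :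
    KStepP n (yamPerm lam mu n T.row) (yamPerm lam mu n S.row) := by
  obtain ⟨i, hi, hrow, hcol⟩ := hTS
  simp only [Set.mem_union, SkewSYT.peakSet, SkewSYT.valleySet, Set.mem_setOf_eq] at hi
  have hmem : 2 ≤ i ∧ i + 1 ≤ n ∧
      ((T.row (i-1) < T.row i ∧ T.row (i+1) ≤ T.row i) ∨
       (T.row i ≤ T.row (i-1) ∧ T.row i < T.row (i+1))) := by
    rcases hi with hp | hv
    · exact ⟨hp.1, hp.2.1, Or.inr ⟨hp.2.2.1, hp.2.2.2⟩⟩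
    · exact ⟨hv.1, hv.2.1, Or.inl ⟨hv.2.2.1, hv.2.2.2⟩⟩
  obtain ⟨hi2, hin, hg⟩ := hmem
  have hE : i - 1 + 1 = i := by omega
  refine ⟨i, hi2, hin, (gate_iff T hi2 hin).mpr hg, ?_⟩
  by_cases hsl : swapLowCond T.row i
  · have hrne : T.row (i-1) ≠ T.row i := (rows_ne T hi2 hin hg).1 hsl
    have hs := yam_swap (lam := lam) (mu := mu) (n := n) T.row (p := i-1) (by omega)
      (by omega) (by rw [hE]; exact hrne)
    rw [hE] at hs
    rw [hrow]
    unfold kRow kSwap kappaP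
    rw [if_pos hsl, if_pos ((cond_iff T hi2 hin).mpr hsl)]
    exact hs
  · have hrne : T.row i ≠ T.row (i+1) := (rows_ne T hi2 hin hg).2 hsl
    have hs := yam_swap (lam := lam) (mu := mu) (n := n) T.row (p := i) (by omega) hin hrne
    rw [hrow]
    unfold kRow kSwap kappaP
    rw [if_neg hsl, if_neg (fun hc => hsl ((cond_iff T hi2 hin).mp hc))]
    exact hs

end Stmt8Aux

namespace Stmt8Aux

variable {lam mu : ℕ → ℕ} {n : ℕ}

lemma stepP_T (h : IsSkewShape lam mu) (T : SkewSYT lam mu n) {w' : ℕ → ℕ}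
    (hs : KStepP n (yamPerm lam mu n T.row) w') :
    ∃ S : SkewSYT lam mu n, KStepT T S ∧ w' = yamPerm lam mu n S.row := by
  obtain ⟨i, hi2, hin, hgate, hw'⟩ := hs
  have hE : i - 1 + 1 = i := by omega
  have hg := (gate_iff T hi2 hin).mp hgate
  have hmem : i ∈ T.peakSet ∪ T.valleySet := by
    rcases hg with hv | hp
    · exact Set.mem_union_right _ (show i ∈ T.valleySet from ⟨hi2, hin, hv.1, hv.2⟩)
    · exact Set.mem_union_left _ (show i ∈ T.peakSet from ⟨hi2, hin, hp.1, hp.2⟩)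
  by_cases hsl : swapLowCond T.row i
  · have hrne : T.row (i-1) ≠ T.row i := (rows_ne T hi2 hin hg).1 hsl
    have hcne : T.col (i-1) ≠ T.col i := by
      rcases hsl with hc1 | hc2
      · exact colne_A h T hi2 hin hc1.1 hc1.2.1 hc1.2.2
      · intro hcc
        have := (lt_iff_col T (k := i-1) (l := i) (by omega) (by omega) (by omega)
          (by omega) hcc).mp (by omega)
        omega
    obtain ⟨S, hSr, hSc⟩ := exists_swap T (p := i-1) (by omega) (by omega)
      (by rw [hE]; exact hrne) (by rw [hE]; exact hcne)
    rw [hE] at hSr hSc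
    have hs2 := yam_swap (lam := lam) (mu := mu) (n := n) T.row (p := i-1) (by omega)
      (by omega) (by rw [hE]; exact hrne)
    rw [hE] at hs2
    refine ⟨S, ⟨i, hmem, ?_, ?_⟩, ?_⟩
    · rw [hSr]; unfold kRow kSwap; rw [if_pos hsl]
    · rw [hSc]; unfold kCol kSwap; rw [if_pos hsl]
    · rw [hw', hSr]
      unfold kappaP
      rw [if_pos ((cond_iff T hi2 hin).mpr hsl)]
      exact hs2.symm
  · have hrne : T.row i ≠ T.row (i+1) := (rows_ne T hi2 hin hg).2 hsl
    have hcne : T.col i ≠ T.col (i+1) := by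
      rcases hg with hv | hp
      · intro hcc
        have := (lt_iff_col T (k := i) (l := i+1) (by omega) (by omega) (by omega)
          (by omega) hcc).mp (by omega)
        omega
      · refine colne_B h T hi2 hin hp.1 hp.2 ?_
        unfold swapLowCond at hsl
        omega
    obtain ⟨S, hSr, hSc⟩ := exists_swap T (p := i) (by omega) hin hrne hcne
    have hs2 := yam_swap (lam := lam) (mu := mu) (n := n) T.row (p := i) (by omega) hin hrne
    refine ⟨S, ⟨i, hmem, ?_, ?_⟩, ?_⟩
    · rw [hSr]; unfold kRow kSwap; rw [if_neg hsl]
    · rw [hSc]; unfold kCol kSwap; rw [if_neg hsl]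
    · rw [hw', hSr]
      unfold kappaP
      rw [if_neg (fun hc => hsl ((cond_iff T hi2 hin).mp hc))]
      exact hs2.symm

end Stmt8Aux


/-- Two standard Young tableaux of the same skew shape `lam/mu` are Knuth-equivalent
(connected by a sequence of Knuth transformations on SYTs) if and only if their
Yamanouchi permutations are Knuth-equivalent as permutations. -/
theorem stmt8 (lam mu : ℕ → ℕ) (n : ℕ) (h : IsSkewShape lam mu)
    (T S : SkewSYT lam mu n) :
    Relation.ReflTransGen KStepT T S ↔
      KEquivP n (yamPerm lam mu n T.row) (yamPerm lam mu n S.row) := by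
  constructor
  · intro hTS
    induction hTS with
    | refl => exact Relation.ReflTransGen.refl
    | tail h1 h2 ih => exact Relation.ReflTransGen.tail ih (Stmt8Aux.stepT_P h2)
  · intro hw
    have hs : ∀ w, Relation.ReflTransGen (KStepP n) (yamPerm lam mu n T.row) w →
        ∃ U : SkewSYT lam mu n,
          Relation.ReflTransGen KStepT T U ∧ w = yamPerm lam mu n U.row := by
      intro w hw'
      induction hw' with
      | refl => exact ⟨T, Relation.ReflTransGen.refl, rfl⟩
      | tail h1 h2 ih =>
        obtain ⟨U, hU, hUe⟩ := ih
        rw [hUe] at h2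
        obtain ⟨V, hV, hV2⟩ := Stmt8Aux.stepP_T h U h2
        exact ⟨V, Relation.ReflTransGen.tail hU hV, hV2⟩
    obtain ⟨U, hU, hUw⟩ := hs _ hw
    have hUS : U = S :=
      Stmt8Aux.syt_ext_row U S (Stmt8Aux.row_eq_of_yam_eq U S hUw.symm)
    rwa [hUS] at hU
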